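/- The function V is continuous on [0,T]×ℝ; the partial derivatives ∂ₜV and ∂ₓV exist at every point of (0,T)×ℝ and are continuous there; and at every point (t,x) ∈ (0,T)×ℝ lying on the switching curve, i.e., with e^{r(T−t)}x + g₁(t) = 0, one has V(t,x) = 0, ∂ₜV(t,x) = 0, and ∂ₓV(t,x) = 0. -/

import Mathlib

open Real Set

lemma hQmax (u : ℝ) : HasDerivAt (fun y : ℝ => y * max y 0) (2 * max u 0) u := by
  rcases lt_trichotomy u 0 with h | h | h
  · have he : (fun y : ℝ => y * max y 0) =ᶠ[nhds u] fun _ => (0:ℝ) := by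
      filter_upwards [Iio_mem_nhds h] with y hy
      simp [max_eq_right (le_of_lt (mem_Iio.mp hy))]
    have := (hasDerivAt_const u (0:ℝ)).congr_of_eventuallyEq he
    simpa [max_eq_right h.le] using this
  · subst h
    rw [hasDerivAt_iff_tendsto_slope]
    have he : slope (fun y : ℝ => y * max y 0) 0 =ᶠ[nhdsWithin 0 {(0:ℝ)}ᶜ] fun y => max y 0 := by
      filter_upwards [self_mem_nhdsWithin] with y hy
      have hy' : y ≠ 0 := hy
      rw [slope_def_field]; field_simp; ring
    rw [Filter.tendsto_congr' he]
    have : Filter.Tendsto (fun y : ℝ => max y 0) (nhds 0) (nhds (max 0 0)) :=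
      (continuous_id.max continuous_const).tendsto 0
    simpa using this.mono_left nhdsWithin_le_nhds
  · have he : (fun y : ℝ => y * max y 0) =ᶠ[nhds u] fun y => y * y := by
      filter_upwards [Ioi_mem_nhds h] with y hy
      simp [max_eq_left (le_of_lt (mem_Ioi.mp hy))]
    have := ((hasDerivAt_id u).mul (hasDerivAt_id u)).congr_of_eventuallyEq he
    exact this.congr_deriv (by simp [max_eq_left h.le]; ring)

lemma hQmin (u : ℝ) : HasDerivAt (fun y : ℝ => y * min y 0) (2 * min u 0) u := by
  have h1 : HasDerivAt (fun y : ℝ => (-y) * max (-y) 0) (2 * max (-u) 0 * (-1)) u :=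
    (hQmax (-u)).comp u (hasDerivAt_neg u)
  have heq : (fun y : ℝ => (-y) * max (-y) 0) = fun y : ℝ => y * min y 0 := by
    funext y
    rcases le_total y 0 with hy | hy
    · simp [max_eq_left (neg_nonneg.mpr hy), min_eq_left hy]
    · simp [max_eq_right (neg_nonpos.mpr hy), min_eq_right hy]
  rw [heq] at h1
  convert h1 using 1
  rcases le_total u 0 with hy | hy
  · simp [max_eq_left (neg_nonneg.mpr hy), min_eq_left hy]
  · simp [max_eq_right (neg_nonpos.mpr hy), min_eq_right hy]

/-- V is continuous on [0,T]×ℝ, its first partial derivatives ∂ₜV, ∂ₓV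
exist on (0,T)×ℝ and are continuous there, and on the switching curve
e^{r(T−t)}x + g₁(t) = 0 one has V = 0, ∂ₜV = 0 and ∂ₓV = 0. -/
theorem stmt_7
    (T r μ σ a b η θ d γ : ℝ)
    (hT : 0 < T) (hr : 0 < r) (hσ : 0 < σ) (ha : 0 < a) (hb : 0 < b)
    (hη : 0 < η) (hμr : r < μ)
    (f : ℝ) (hf : f = a * θ - a * η + (d - γ) * r)
    (A₁ : ℝ) (hA₁ : A₁ = -(μ - r) ^ 2 / (2 * σ ^ 2) - a ^ 2 * η ^ 2 / (2 * b ^ 2))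
    (g₁ : ℝ → ℝ) (hg₁ : ∀ t, g₁ t = f * (exp (r * (T - t)) - 1) / r)
    (V : ℝ → ℝ → ℝ)
    (hV : ∀ t x, V t x =
      if 0 ≤ exp (r * (T - t)) * x + g₁ t
      then (1 / 2) * (exp (r * (T - t)) * x + g₁ t) ^ 2
      else (1 / 2) * exp (2 * A₁ * (T - t)) * (exp (r * (T - t)) * x + g₁ t) ^ 2) :
    ContinuousOn (fun p : ℝ × ℝ => V p.1 p.2) (Icc (0 : ℝ) T ×ˢ (univ : Set ℝ)) ∧
    ∃ Vt Vx : ℝ → ℝ → ℝ,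
      (∀ t x : ℝ, t ∈ Ioo (0 : ℝ) T →
        HasDerivAt (fun s => V s x) (Vt t x) t ∧ HasDerivAt (fun y => V t y) (Vx t x) x) ∧
      ContinuousOn (fun p : ℝ × ℝ => Vt p.1 p.2) (Ioo (0 : ℝ) T ×ˢ (univ : Set ℝ)) ∧
      ContinuousOn (fun p : ℝ × ℝ => Vx p.1 p.2) (Ioo (0 : ℝ) T ×ˢ (univ : Set ℝ)) ∧
      (∀ t x : ℝ, t ∈ Ioo (0 : ℝ) T → exp (r * (T - t)) * x + g₁ t = 0 →
        V t x = 0 ∧ Vt t x = 0 ∧ Vx t x = 0) := by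
  -- abbreviations
  have hVform : ∀ t x, V t x =
      (1/2) * ((exp (r*(T-t))*x + g₁ t) * max (exp (r*(T-t))*x + g₁ t) 0)
      + (1/2) * (exp (2*A₁*(T-t)) * ((exp (r*(T-t))*x + g₁ t) * min (exp (r*(T-t))*x + g₁ t) 0)) := by
    intro t x
    rw [hV]
    rcases le_or_gt 0 (exp (r*(T-t))*x + g₁ t) with h | h
    · rw [if_pos h, max_eq_left h, min_eq_right h]; ring
    · rw [if_neg (not_le.mpr h), max_eq_right h.le, min_eq_left h.le]; ring
  -- continuity of building blocks
  have contH : Continuous (fun p : ℝ × ℝ => exp (r*(T-p.1))*p.2 + g₁ p.1) := by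
    have : (fun p : ℝ × ℝ => exp (r*(T-p.1))*p.2 + g₁ p.1)
        = fun p : ℝ × ℝ => exp (r*(T-p.1))*p.2 + f * (exp (r * (T - p.1)) - 1) / r := by
      funext p; rw [hg₁]
    rw [this]; fun_prop
  have cmax : Continuous (fun p : ℝ × ℝ => max (exp (r*(T-p.1))*p.2 + g₁ p.1) 0) :=
    contH.max continuous_const
  have cmin : Continuous (fun p : ℝ × ℝ => min (exp (r*(T-p.1))*p.2 + g₁ p.1) 0) :=
    contH.min continuous_const
  have ce1 : Continuous (fun p : ℝ × ℝ => exp (r*(T-p.1))) := by fun_prop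
  have ce2 : Continuous (fun p : ℝ × ℝ => exp (2*A₁*(T-p.1))) := by fun_prop
  -- derivative of exp (r*(T-·)) etc.
  have he : ∀ t : ℝ, HasDerivAt (fun s => exp (r*(T-s))) (exp (r*(T-t)) * (-r)) t := by
    intro t
    have h1 : HasDerivAt (fun s : ℝ => r*(T-s)) (-r) t := by
      simpa using ((hasDerivAt_id t).const_sub T).const_mul r
    exact h1.exp
  have hg : ∀ t : ℝ, HasDerivAt g₁ (f * (exp (r*(T-t)) * (-r)) / r) t := by
    intro t
    have : g₁ = fun s => f * (exp (r * (T - s)) - 1) / r := funext hg₁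
    rw [this]
    exact (((he t).sub_const 1).const_mul f).div_const r
  have hHt : ∀ t x : ℝ, HasDerivAt (fun s => exp (r*(T-s))*x + g₁ s)
      (exp (r*(T-t)) * (-r) * x + f * (exp (r*(T-t)) * (-r)) / r) t := fun t x =>
    (((he t).mul_const x)).add (hg t)
  have hHx : ∀ t x : ℝ, HasDerivAt (fun y => exp (r*(T-t))*y + g₁ t) (exp (r*(T-t))) x := by
    intro t x
    simpa using (((hasDerivAt_id x).const_mul (exp (r*(T-t)))).add_const (g₁ t))
  have hE : ∀ t : ℝ, HasDerivAt (fun s => exp (2*A₁*(T-s))) (exp (2*A₁*(T-t)) * (-(2*A₁))) t := by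
    intro t
    have h1 : HasDerivAt (fun s : ℝ => 2*A₁*(T-s)) (-(2*A₁)) t := by
      simpa using ((hasDerivAt_id t).const_sub T).const_mul (2*A₁)
    exact h1.exp
  refine ⟨?_, fun t x =>
      (1/2) * ((2 * max (exp (r*(T-t))*x + g₁ t) 0) * (exp (r*(T-t)) * (-r) * x + f * (exp (r*(T-t)) * (-r)) / r))
      + (1/2) * ((exp (2*A₁*(T-t)) * (-(2*A₁))) * ((exp (r*(T-t))*x + g₁ t) * min (exp (r*(T-t))*x + g₁ t) 0)
        + exp (2*A₁*(T-t)) * ((2 * min (exp (r*(T-t))*x + g₁ t) 0) * (exp (r*(T-t)) * (-r) * x + f * (exp (r*(T-t)) * (-r)) / r))),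
    fun t x =>
      (1/2) * ((2 * max (exp (r*(T-t))*x + g₁ t) 0) * exp (r*(T-t)))
      + (1/2) * (exp (2*A₁*(T-t)) * ((2 * min (exp (r*(T-t))*x + g₁ t) 0) * exp (r*(T-t)))),
    ?_, ?_, ?_, ?_⟩
  · -- continuity of V
    have : (fun p : ℝ × ℝ => V p.1 p.2) = fun p : ℝ × ℝ =>
        (1/2) * ((exp (r*(T-p.1))*p.2 + g₁ p.1) * max (exp (r*(T-p.1))*p.2 + g₁ p.1) 0)
        + (1/2) * (exp (2*A₁*(T-p.1)) * ((exp (r*(T-p.1))*p.2 + g₁ p.1) * min (exp (r*(T-p.1))*p.2 + g₁ p.1) 0)) := by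
      funext p; exact hVform p.1 p.2
    rw [this]
    exact ((continuous_const.mul (contH.mul cmax)).add (continuous_const.mul (ce2.mul (contH.mul cmin)))).continuousOn
  · -- derivatives
    intro t x _
    constructor
    · have d1 : HasDerivAt (fun s => (exp (r*(T-s))*x + g₁ s) * max (exp (r*(T-s))*x + g₁ s) 0)
          ((2 * max (exp (r*(T-t))*x + g₁ t) 0) * (exp (r*(T-t)) * (-r) * x + f * (exp (r*(T-t)) * (-r)) / r)) t :=
        (hQmax _).comp t (hHt t x)
      have d2 : HasDerivAt (fun s => (exp (r*(T-s))*x + g₁ s) * min (exp (r*(T-s))*x + g₁ s) 0)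
          ((2 * min (exp (r*(T-t))*x + g₁ t) 0) * (exp (r*(T-t)) * (-r) * x + f * (exp (r*(T-t)) * (-r)) / r)) t :=
        (hQmin _).comp t (hHt t x)
      have d3 := (hE t).mul d2
      have := (d1.const_mul (1/2 : ℝ)).add (d3.const_mul (1/2 : ℝ))
      have heq : (fun s => V s x) = fun s =>
          (1/2) * ((exp (r*(T-s))*x + g₁ s) * max (exp (r*(T-s))*x + g₁ s) 0)
          + (1/2) * (exp (2*A₁*(T-s)) * ((exp (r*(T-s))*x + g₁ s) * min (exp (r*(T-s))*x + g₁ s) 0)) := by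
        funext s; exact hVform s x
      rw [heq]
      exact this
    · have e1 : HasDerivAt (fun y => (exp (r*(T-t))*y + g₁ t) * max (exp (r*(T-t))*y + g₁ t) 0)
          ((2 * max (exp (r*(T-t))*x + g₁ t) 0) * exp (r*(T-t))) x :=
        (hQmax _).comp x (hHx t x)
      have e2 : HasDerivAt (fun y => (exp (r*(T-t))*y + g₁ t) * min (exp (r*(T-t))*y + g₁ t) 0)
          ((2 * min (exp (r*(T-t))*x + g₁ t) 0) * exp (r*(T-t))) x :=
        (hQmin _).comp x (hHx t x)
      have := (e1.const_mul (1/2 : ℝ)).add ((e2.const_mul (exp (2*A₁*(T-t)))).const_mul (1/2 : ℝ))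
      have heq : (fun y => V t y) = fun y =>
          (1/2) * ((exp (r*(T-t))*y + g₁ t) * max (exp (r*(T-t))*y + g₁ t) 0)
          + (1/2) * (exp (2*A₁*(T-t)) * ((exp (r*(T-t))*y + g₁ t) * min (exp (r*(T-t))*y + g₁ t) 0)) := by
        funext y; exact hVform t y
      rw [heq]
      exact this
  · -- continuity of Vt
    have cD : Continuous (fun p : ℝ × ℝ =>
        exp (r*(T-p.1)) * (-r) * p.2 + f * (exp (r*(T-p.1)) * (-r)) / r) := by fun_prop
    exact ((continuous_const.mul ((continuous_const.mul cmax).mul cD)).add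
      (continuous_const.mul (((ce2.mul continuous_const).mul (contH.mul cmin)).add
        (ce2.mul ((continuous_const.mul cmin).mul cD))))).continuousOn
  · -- continuity of Vx
    exact ((continuous_const.mul ((continuous_const.mul cmax).mul ce1)).add
      (continuous_const.mul (ce2.mul ((continuous_const.mul cmin).mul ce1)))).continuousOn
  · -- switching curve
    intro t x _ h0
    refine ⟨?_, ?_, ?_⟩
    · rw [hVform, h0]; simp
    · simp only [h0]; simp
    · simp only [h0]; simp
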